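/- For all r > 0 and ε > 0 one has, almost surely, liminf_{n→∞} ρ_n^{(r)} ≤ ρ_∞^{(r)} ≤ limsup_{n→∞} ρ_n^{(r+ε)}. -/

import Mathlib

open MeasureTheory Filter Set

section AuxRho

variable {E : Type*} [NormedAddCommGroup E]

/-- The deterministic exit-time functional: `inf {t ∈ (0,σ) : q < ‖f t‖}` with `inf ∅ = T`. -/
noncomputable def eRho (T σ : ℝ) (f : ℝ → E) (q : ℝ) : ℝ :=
  sInf ({t : ℝ | t ∈ Set.Ioo 0 σ ∧ q < ‖f t‖} ∪ {T})

variable {T σ q q' : ℝ} {f : ℝ → E}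

lemma eRho_bddBelow (hT : 0 ≤ T) :
    BddBelow ({t : ℝ | t ∈ Set.Ioo 0 σ ∧ q < ‖f t‖} ∪ {T}) := by
  refine ⟨0, fun t ht => ?_⟩
  rcases ht with ⟨ht, _⟩ | ht
  · exact ht.1.le
  · simp only [Set.mem_singleton_iff] at ht; exact ht ▸ hT

lemma eRho_nonneg (hT : 0 ≤ T) : 0 ≤ eRho T σ f q :=
  le_csInf ⟨T, Or.inr rfl⟩ (fun t ht => by
    rcases ht with ⟨ht, _⟩ | ht
    · exact ht.1.le
    · simp only [Set.mem_singleton_iff] at ht; exact ht ▸ hT)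

lemma eRho_le_T (hT : 0 ≤ T) : eRho T σ f q ≤ T :=
  csInf_le (eRho_bddBelow hT) (Or.inr rfl)

lemma eRho_le_of_mem (hT : 0 ≤ T) {t : ℝ} (ht : t ∈ Set.Ioo 0 σ) (hq : q < ‖f t‖) :
    eRho T σ f q ≤ t :=
  csInf_le (eRho_bddBelow hT) (Or.inl ⟨ht, hq⟩)

lemma eRho_mono (hT : 0 ≤ T) (hqq' : q ≤ q') : eRho T σ f q ≤ eRho T σ f q' := by
  refine csInf_le_csInf (eRho_bddBelow hT) ⟨T, Or.inr rfl⟩ ?_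
  rintro t (⟨ht, hq⟩ | ht)
  · exact Or.inl ⟨ht, lt_of_le_of_lt hqq' hq⟩
  · exact Or.inr ht

lemma eRho_exists_lt (hT : 0 ≤ T) {b : ℝ} (h : eRho T σ f q < b) (hbT : b ≤ T) :
    ∃ t, t ∈ Set.Ioo 0 σ ∧ q < ‖f t‖ ∧ t < b := by
  obtain ⟨u, hu, hub⟩ := exists_lt_of_csInf_lt ⟨T, Or.inr rfl⟩ h
  rcases hu with ⟨hmem, hq⟩ | hu
  · exact ⟨u, hmem, hq, hub⟩
  · simp only [Set.mem_singleton_iff] at hu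
    exact absurd (hu ▸ hub) (not_lt.mpr hbT)

/-- If the exit time is `< T` then it is `< σ` and the norm at the exit time is `≥ q`. -/
lemma eRho_struct (hT : 0 < T) (hσ : σ ∈ Set.Ioc 0 T) (hf : ContinuousOn f (Set.Ico 0 σ))
    (h : eRho T σ f q < T) : eRho T σ f q < σ ∧ q ≤ ‖f (eRho T σ f q)‖ := by
  set s := eRho T σ f q with hs
  have hs0 : 0 ≤ s := eRho_nonneg hT.le
  have key : ∀ j : ℕ, ∃ t, t ∈ Set.Ioo 0 σ ∧ q < ‖f t‖ ∧ t < s + (T - s) / (j + 1) := by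
    intro j
    refine eRho_exists_lt hT.le ?_ ?_
    · have : 0 < (T - s) / (j + 1 : ℝ) := by
        apply div_pos (by linarith) (by positivity)
      linarith
    · have : (T - s) / (j + 1 : ℝ) ≤ T - s := by
        apply div_le_self (by linarith)
        have : (0:ℝ) ≤ (j:ℝ) := Nat.cast_nonneg j
        linarith
      linarith
  choose u hmem hq hlt using key
  have hsu : ∀ j, s ≤ u j := fun j => eRho_le_of_mem hT.le (hmem j) (hq j)
  have hslt : s < σ := lt_of_le_of_lt (hsu 0) (hmem 0).2
  have htend0 : Tendsto (fun j : ℕ => s + (T - s) / (j + 1)) atTop (nhds s) := by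
    have h1 : Tendsto (fun j : ℕ => (T - s) * (1 / ((j:ℝ) + 1))) atTop (nhds ((T - s) * 0)) :=
      tendsto_const_nhds.mul tendsto_one_div_add_atTop_nhds_zero_nat
    have h2 : Tendsto (fun j : ℕ => (T - s) / ((j:ℝ) + 1)) atTop (nhds 0) := by
      simpa [div_eq_mul_inv] using h1
    simpa using tendsto_const_nhds.add h2
  have hu_tendsto : Tendsto u atTop (nhds s) :=
    tendsto_of_tendsto_of_tendsto_of_le_of_le tendsto_const_nhds htend0 hsu
      (fun j => (hlt j).le)
  have hfc : ContinuousWithinAt f (Set.Ico 0 σ) s := hf s ⟨hs0, hslt⟩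
  have hu_mem : ∀ j, u j ∈ Set.Ico 0 σ := fun j => ⟨(hmem j).1.le, (hmem j).2⟩
  have hu_tendsto' : Tendsto u atTop (nhdsWithin s (Set.Ico 0 σ)) :=
    tendsto_nhdsWithin_iff.mpr ⟨hu_tendsto, Filter.Eventually.of_forall hu_mem⟩
  have hftend : Tendsto (fun j => f (u j)) atTop (nhds (f s)) := hfc.tendsto.comp hu_tendsto'
  refine ⟨hslt, ge_of_tendsto hftend.norm ?_⟩
  exact Filter.Eventually.of_forall fun j => (hq j).le

/-- If `q < ‖f s‖` for `s ∈ [0, σ)` then the exit time is `≤ s`. -/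
lemma eRho_le_of_norm_gt (hT : 0 < T) (hσ : σ ∈ Set.Ioc 0 T)
    (hf : ContinuousOn f (Set.Ico 0 σ)) {s : ℝ} (hs : s ∈ Set.Ico 0 σ) (hq : q < ‖f s‖) :
    eRho T σ f q ≤ s := by
  by_contra hcon
  push_neg at hcon
  have hne : (nhdsWithin s (Set.Ioo 0 σ)).NeBot := by
    rw [← mem_closure_iff_nhdsWithin_neBot, closure_Ioo (ne_of_lt hσ.1)]
    exact ⟨hs.1, hs.2.le⟩
  have hc : ContinuousWithinAt f (Set.Ioo 0 σ) s :=
    (hf s hs).mono Set.Ioo_subset_Ico_self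
  have hev1 : ∀ᶠ t in nhdsWithin s (Set.Ioo 0 σ), q < ‖f t‖ := by
    have hopen : {x : E | q < ‖x‖} ∈ nhds (f s) :=
      (isOpen_lt continuous_const continuous_norm).mem_nhds hq
    exact hc hopen
  have hev2 : ∀ᶠ t in nhdsWithin s (Set.Ioo 0 σ), t < eRho T σ f q :=
    eventually_nhdsWithin_of_eventually_nhds
      ((tendsto_id (x := nhds s)).eventually_lt_const hcon)
  have hev3 : ∀ᶠ t in nhdsWithin s (Set.Ioo 0 σ), t ∈ Set.Ioo 0 σ :=
    eventually_mem_nhdsWithin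
  obtain ⟨t, h1, h2, h3⟩ := (hev1.and (hev2.and hev3)).exists
  exact absurd (eRho_le_of_mem hT.le h3 h1) (not_le.mpr h2)

/-- The exit time is at most `σ`, using the explosion property. -/
lemma eRho_le_sigma (hT : 0 < T) (hσ : σ ∈ Set.Ioc 0 T)
    (hexp : σ < T → ∃ᶠ t in nhdsWithin σ (Set.Iio σ), q < ‖f t‖) :
    eRho T σ f q ≤ σ := by
  rcases eq_or_lt_of_le hσ.2 with heq | hlt
  · rw [heq]; exact eRho_le_T hT.le
  · have hfreq := hexp hlt
    have hev : ∀ᶠ t in nhdsWithin σ (Set.Iio σ), t ∈ Set.Ioo 0 σ := by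
      have h1 : ∀ᶠ t in nhds σ, 0 < t := (tendsto_id (x := nhds σ)).eventually_const_lt hσ.1
      have h2 : ∀ᶠ t in nhdsWithin σ (Set.Iio σ), 0 < t :=
        eventually_nhdsWithin_of_eventually_nhds h1
      filter_upwards [h2, eventually_mem_nhdsWithin] with t ht1 ht2
      exact ⟨ht1, ht2⟩
    obtain ⟨t, htq, htm⟩ := (hfreq.and_eventually hev).exists
    exact (eRho_le_of_mem hT.le htm htq).trans htm.2.le

end AuxRho

/-- Suprema over `[0,T]` of continuous functions are achieved over a bounded range. -/
lemma bddAbove_range_icc {T : ℝ} {g : ℝ → ℝ} (hg : Continuous g) :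
    BddAbove (Set.range fun t : Set.Icc (0:ℝ) T => g t) := by
  have h : (Set.range fun t : Set.Icc (0:ℝ) T => g t) = g '' Set.Icc 0 T := by
    rw [show (fun t : Set.Icc (0:ℝ) T => g t) = g ∘ (Subtype.val) from rfl,
      Set.range_comp, Subtype.range_coe]
  rw [h]
  exact (isCompact_Icc.image hg).bddAbove

/-- Diagonal extraction: a single subsequence along which countably many sequences,
each tending to zero in measure, tend to zero almost everywhere simultaneously. -/
lemma exists_subseq_tendsto_ae_zero {Ω : Type*} [MeasurableSpace Ω] (P : Measure Ω)
    (F : ℕ → ℕ → Ω → ℝ) (hF : ∀ m, TendstoInMeasure P (F m) atTop (fun _ => (0 : ℝ))) :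
    ∃ φ : ℕ → ℕ, StrictMono φ ∧
      ∀ᵐ ω ∂P, ∀ m, Tendsto (fun k => F m (φ k) ω) atTop (nhds 0) := by
  have step : ∀ (m : ℕ) (ψ : ℕ → ℕ), StrictMono ψ → ∃ ns : ℕ → ℕ, StrictMono ns ∧
      ∀ᵐ ω ∂P, Tendsto (fun k => F m (ψ (ns k)) ω) atTop (nhds 0) := by
    intro m ψ hψ
    have hsub : TendstoInMeasure P (fun k => F m (ψ k)) atTop (fun _ => (0 : ℝ)) :=
      fun δ hδ => ((hF m) δ hδ).comp hψ.tendsto_atTop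
    exact hsub.exists_seq_tendsto_ae
  choose! ns hns1 hns2 using step
  set G : ℕ → ℕ → ℕ := fun m => Nat.rec (ns 0 id) (fun m' Gm' => Gm' ∘ ns (m' + 1) Gm') m
    with hG
  have hGmono : ∀ m, StrictMono (G m) := by
    intro m
    induction m with
    | zero => exact hns1 0 id strictMono_id
    | succ m ih => exact ih.comp (hns1 (m + 1) (G m) ih)
  have hGae : ∀ m, ∀ᵐ ω ∂P, Tendsto (fun k => F m (G m k) ω) atTop (nhds 0) := by
    intro m
    cases m with
    | zero => exact hns2 0 id strictMono_id
    | succ m => exact hns2 (m + 1) (G m) (hGmono m)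
  have key : ∀ m k, m ≤ k → ∀ p, ∃ j, p ≤ j ∧ G k p = G m j := by
    intro m k hmk
    induction k with
    | zero =>
      intro p
      have : m = 0 := Nat.le_zero.mp hmk
      subst this; exact ⟨p, le_rfl, rfl⟩
    | succ k ih =>
      intro p
      rcases Nat.lt_succ_iff_lt_or_eq.mp (Nat.lt_succ_of_le hmk) with hlt | heq
      · have hmk' : m ≤ k := Nat.lt_succ_iff.mp hlt
        obtain ⟨j, hj, he⟩ := ih hmk' (ns (k + 1) (G k) p)
        exact ⟨j, le_trans (hns1 (k + 1) (G k) (hGmono k)).le_apply hj, he⟩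
      · subst heq; exact ⟨p, le_rfl, rfl⟩
  refine ⟨fun k => G k k, ?_, ?_⟩
  · apply strictMono_nat_of_lt_succ
    intro k
    have h1 : k < ns (k + 1) (G k) (k + 1) :=
      lt_of_lt_of_le (Nat.lt_succ_self k) (hns1 (k + 1) (G k) (hGmono k)).le_apply
    exact (hGmono k) h1
  · refine ae_all_iff.mpr fun m => ?_
    filter_upwards [hGae m] with ω hω
    have hj : ∀ k, ∃ j, k ≤ j ∧ (m ≤ k → G k k = G m j) := by
      intro k
      by_cases h : m ≤ k
      · obtain ⟨j, hj1, hj2⟩ := key m k h k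
        exact ⟨j, hj1, fun _ => hj2⟩
      · exact ⟨k, le_rfl, fun h' => absurd h' h⟩
    choose j hj1 hj2 using hj
    have hjt : Tendsto j atTop atTop := tendsto_atTop_mono hj1 tendsto_id
    refine (hω.comp hjt).congr' ?_
    filter_upwards [eventually_ge_atTop m] with k hk
    exact congrArg (fun x => F m x ω) (hj2 k hk).symm
theorem stmt_1
    {Ω : Type*} [MeasurableSpace Ω] (P : Measure Ω) [IsProbabilityMeasure P]
    {E : Type*} [NormedAddCommGroup E] [NormedSpace ℝ E] [CompleteSpace E]
    [MeasurableSpace E] [BorelSpace E]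
    (T : ℝ) (hT : 0 < T)
    -- the explosion times σ_n (n ∈ ℕ) and σ_∞
    (σ : ℕ → Ω → ℝ) (σi : Ω → ℝ)
    (hσmeas : ∀ n, Measurable (σ n)) (hσimeas : Measurable σi)
    (hσmem : ∀ n ω, σ n ω ∈ Set.Ioc 0 T) (hσimem : ∀ ω, σi ω ∈ Set.Ioc 0 T)
    -- the processes X_n (n ∈ ℕ) and X_∞, jointly measurable
    (X : ℕ → ℝ → Ω → E) (Xi : ℝ → Ω → E)
    (hXmeas : ∀ n, Measurable fun p : ℝ × Ω => X n p.1 p.2)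
    (hXimeas : Measurable fun p : ℝ × Ω => Xi p.1 p.2)
    -- path continuity on [0, σ_n(ω)), and on [0,T] if σ_n(ω) = T
    (hXcont : ∀ n ω, ContinuousOn (fun t => X n t ω) (Set.Ico 0 (σ n ω)))
    (hXcontT : ∀ n ω, σ n ω = T → ContinuousOn (fun t => X n t ω) (Set.Icc 0 T))
    (hXicont : ∀ ω, ContinuousOn (fun t => Xi t ω) (Set.Ico 0 (σi ω)))
    (hXicontT : ∀ ω, σi ω = T → ContinuousOn (fun t => Xi t ω) (Set.Icc 0 T))
    -- σ_n is an explosion time: on {σ_n < T}, limsup_{t ↑ σ_n} ‖X_n(t)‖ = ∞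
    (hexpl : ∀ n ω, σ n ω < T →
      ∀ M : ℝ, ∃ᶠ t in nhdsWithin (σ n ω) (Set.Iio (σ n ω)), M < ‖X n t ω‖)
    (hexpli : ∀ ω, σi ω < T →
      ∀ M : ℝ, ∃ᶠ t in nhdsWithin (σi ω) (Set.Iio (σi ω)), M < ‖Xi t ω‖)
    -- the stopping times ρ_n^{(r)} = inf { t ∈ (0, σ_n) : ‖X_n(t)‖ > r }, inf ∅ := T
    (ρ : ℕ → ℝ → Ω → ℝ) (ρi : ℝ → Ω → ℝ)
    (hρ : ∀ n r ω, ρ n r ω = sInf ({t : ℝ | t ∈ Set.Ioo 0 (σ n ω) ∧ r < ‖X n t ω‖} ∪ {T}))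
    (hρi : ∀ r ω, ρi r ω = sInf ({t : ℝ | t ∈ Set.Ioo 0 (σi ω) ∧ r < ‖Xi t ω‖} ∪ {T}))
    -- the globally defined processes X_n^{(r)} (denoted Y n r) and X_∞^{(r)} (denoted Yi r)
    (Y : ℕ → ℝ → ℝ → Ω → E) (Yi : ℝ → ℝ → Ω → E)
    (hYmeas : ∀ n r, Measurable fun p : ℝ × Ω => Y n r p.1 p.2)
    (hYimeas : ∀ r, Measurable fun p : ℝ × Ω => Yi r p.1 p.2)
    (hYcont : ∀ n r ω, Continuous fun t => Y n r t ω)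
    (hYicont : ∀ r ω, Continuous fun t => Yi r t ω)
    -- assumption (a)
    (ha : ∀ n r, 0 < r → ∀ᵐ ω ∂P, ∀ t ∈ Set.Icc 0 (ρ n r ω), Y n r t ω = X n t ω)
    (hai : ∀ r, 0 < r → ∀ᵐ ω ∂P, ∀ t ∈ Set.Icc 0 (ρi r ω), Yi r t ω = Xi t ω)
    -- assumption (b): X_n^{(r)} → X_∞^{(r)} in L⁰(Ω; C([0,T]; E))
    (hb : ∀ r, 0 < r → TendstoInMeasure P
      (fun n ω => ⨆ t : Set.Icc (0:ℝ) T, ‖Y n r (t : ℝ) ω - Yi r (t : ℝ) ω‖)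
      atTop (fun _ => (0 : ℝ)))    :
    ∀ r > (0:ℝ), ∀ ε > (0:ℝ), ∀ᵐ ω ∂P,
      liminf (fun n => ρ n r ω) atTop ≤ ρi r ω ∧
      ρi r ω ≤ limsup (fun n => ρ n (r + ε) ω) atTop := by
  intro r hr ε hε
  have hq_gt : ∀ m : ℕ, r < r + 1 / ((m:ℝ) + 1) := by
    intro m
    have : (0:ℝ) < 1 / ((m:ℝ) + 1) := by positivity
    linarith
  have hq_pos : ∀ m : ℕ, (0:ℝ) < r + 1 / ((m:ℝ) + 1) := fun m => lt_trans hr (hq_gt m)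
  have hrε : (0:ℝ) < r + ε := by linarith
  -- extract subsequences with a.s. uniform convergence
  obtain ⟨φ, hφ, hφae⟩ := exists_subseq_tendsto_ae_zero P
    (fun m n ω => ⨆ t : Set.Icc (0:ℝ) T,
      ‖Y n (r + 1 / ((m:ℝ) + 1)) (t : ℝ) ω - Yi (r + 1 / ((m:ℝ) + 1)) (t : ℝ) ω‖)
    (fun m => hb _ (hq_pos m))
  obtain ⟨ψ, hψ, hψae⟩ := (hb (r + ε) hrε).exists_seq_tendsto_ae
  -- a.e. versions of assumption (a) at the relevant radii
  have hA : ∀ᵐ ω ∂P, ∀ n m : ℕ, ∀ t ∈ Set.Icc 0 (ρ n (r + 1 / ((m:ℝ) + 1)) ω),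
      Y n (r + 1 / ((m:ℝ) + 1)) t ω = X n t ω :=
    ae_all_iff.mpr fun n => ae_all_iff.mpr fun m => ha n _ (hq_pos m)
  have hAi : ∀ᵐ ω ∂P, ∀ m : ℕ, ∀ t ∈ Set.Icc 0 (ρi (r + 1 / ((m:ℝ) + 1)) ω),
      Yi (r + 1 / ((m:ℝ) + 1)) t ω = Xi t ω :=
    ae_all_iff.mpr fun m => hai _ (hq_pos m)
  have hB : ∀ᵐ ω ∂P, ∀ n : ℕ, ∀ t ∈ Set.Icc 0 (ρ n (r + ε) ω),
      Y n (r + ε) t ω = X n t ω :=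
    ae_all_iff.mpr fun n => ha n _ hrε
  have hBi := hai (r + ε) hrε
  filter_upwards [hφae, hψae, hA, hAi, hB, hBi] with ω h1 h2 h3 h4 h5 h6
  -- identification with the deterministic exit time functional
  have hXe : ∀ (n : ℕ) (c : ℝ), ρ n c ω = eRho T (σ n ω) (fun t => X n t ω) c :=
    fun n c => by rw [hρ n c ω]; rfl
  have hXie : ∀ c : ℝ, ρi c ω = eRho T (σi ω) (fun t => Xi t ω) c :=
    fun c => by rw [hρi c ω]; rfl
  have hρ0 : ∀ (n : ℕ) (c : ℝ), 0 ≤ ρ n c ω := fun n c => by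
    rw [hXe]; exact eRho_nonneg hT.le
  have hρT : ∀ (n : ℕ) (c : ℝ), ρ n c ω ≤ T := fun n c => by
    rw [hXe]; exact eRho_le_T hT.le
  have hρσ : ∀ (n : ℕ) (c : ℝ), ρ n c ω ≤ σ n ω := fun n c => by
    rw [hXe]; exact eRho_le_sigma hT (hσmem n ω) (fun hlt => hexpl n ω hlt c)
  have hρi0 : ∀ c : ℝ, 0 ≤ ρi c ω := fun c => by
    rw [hXie]; exact eRho_nonneg hT.le
  have hρiT : ∀ c : ℝ, ρi c ω ≤ T := fun c => by
    rw [hXie]; exact eRho_le_T hT.le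
  have hρiσ : ∀ c : ℝ, ρi c ω ≤ σi ω := fun c => by
    rw [hXie]; exact eRho_le_sigma hT (hσimem ω) (fun hlt => hexpli ω hlt c)
  constructor
  · -- first inequality: liminf ρ_n^{(r)} ≤ ρ_∞^{(r)}
    have hsub : liminf (fun n => ρ n r ω) atTop ≤ liminf (fun k => ρ (φ k) r ω) atTop := by
      have heq : liminf (fun k => ρ (φ k) r ω) atTop
          = liminf (fun n => ρ n r ω) (Filter.map φ atTop) := rfl
      rw [heq]
      refine liminf_le_liminf_of_le hφ.tendsto_atTop ?_ ?_
      · exact isBoundedUnder_of ⟨0, fun n => hρ0 n r⟩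
      · exact IsBoundedUnder.isCoboundedUnder_ge (isBoundedUnder_of ⟨T, fun n => hρT n r⟩)
    refine le_trans hsub ?_
    by_contra hcon
    push_neg at hcon
    set L := liminf (fun k => ρ (φ k) r ω) atTop with hL
    have hcob : IsBoundedUnder (· ≥ ·) atTop (fun k => ρ (φ k) r ω) :=
      isBoundedUnder_of ⟨0, fun k => hρ0 _ r⟩
    have hLT : L ≤ T :=
      liminf_le_of_frequently_le (Filter.Eventually.of_forall (fun k => hρT _ r)).frequently hcob
    have hτT : ρi r ω < T := lt_of_lt_of_le hcon hLT
    set b := (ρi r ω + L) / 2 with hb_def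
    have hb1 : ρi r ω < b := by rw [hb_def]; linarith
    have hb2 : b < L := by rw [hb_def]; linarith
    have hbT : b ≤ T := le_of_lt (lt_of_lt_of_le hb2 hLT)
    have hev1 : ∀ᶠ k in atTop, b < ρ (φ k) r ω := eventually_lt_of_lt_liminf hb2 hcob
    have hτe : eRho T (σi ω) (fun t => Xi t ω) r < b := by rw [← hXie]; exact hb1
    obtain ⟨u0, hu0mem, hu0norm, hu0lt⟩ := eRho_exists_lt hT.le hτe hbT
    obtain ⟨m, hm⟩ := exists_nat_one_div_lt (sub_pos.mpr hu0norm)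
    have hqm_lt : r + 1 / ((m:ℝ) + 1) < ‖Xi u0 ω‖ := by linarith
    set s := ρi (r + 1 / ((m:ℝ) + 1)) ω with hs_def
    have hs_le : s ≤ u0 := by
      rw [hs_def, hXie]; exact eRho_le_of_mem hT.le hu0mem hqm_lt
    have hs0 : 0 ≤ s := hρi0 _
    have hsT : s < T := lt_of_le_of_lt hs_le (lt_of_lt_of_le hu0lt hbT)
    have hstruct : s < σi ω ∧ r + 1 / ((m:ℝ) + 1) ≤ ‖Xi s ω‖ := by
      rw [hs_def, hXie]
      exact eRho_struct hT (hσimem ω) (hXicont ω) (by rw [← hXie]; exact hsT)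
    have hYis : Yi (r + 1 / ((m:ℝ) + 1)) s ω = Xi s ω := h4 m s ⟨hs0, le_rfl⟩
    have hev2 : ∀ᶠ k in atTop,
        (⨆ t : Set.Icc (0:ℝ) T, ‖Y (φ k) (r + 1 / ((m:ℝ) + 1)) (t : ℝ) ω
          - Yi (r + 1 / ((m:ℝ) + 1)) (t : ℝ) ω‖) < 1 / ((m:ℝ) + 1) := by
      have hpos : (0:ℝ) < 1 / ((m:ℝ) + 1) := by positivity
      exact (h1 m).eventually_lt_const hpos
    obtain ⟨k, hk1, hk2⟩ := (hev1.and hev2).exists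
    have hsmem : s ∈ Set.Icc (0:ℝ) T := ⟨hs0, hsT.le⟩
    have hbdd : BddAbove (Set.range fun t : Set.Icc (0:ℝ) T =>
        ‖Y (φ k) (r + 1 / ((m:ℝ) + 1)) (t : ℝ) ω - Yi (r + 1 / ((m:ℝ) + 1)) (t : ℝ) ω‖) :=
      bddAbove_range_icc (((hYcont (φ k) _ ω).sub (hYicont _ ω)).norm)
    have hle : ‖Y (φ k) (r + 1 / ((m:ℝ) + 1)) s ω - Yi (r + 1 / ((m:ℝ) + 1)) s ω‖
        ≤ ⨆ t : Set.Icc (0:ℝ) T, ‖Y (φ k) (r + 1 / ((m:ℝ) + 1)) (t : ℝ) ω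
          - Yi (r + 1 / ((m:ℝ) + 1)) (t : ℝ) ω‖ :=
      le_ciSup hbdd (⟨s, hsmem⟩ : Set.Icc (0:ℝ) T)
    have hYi_norm : r + 1 / ((m:ℝ) + 1) ≤ ‖Yi (r + 1 / ((m:ℝ) + 1)) s ω‖ := by
      rw [hYis]; exact hstruct.2
    have hnorm1 : ‖Yi (r + 1 / ((m:ℝ) + 1)) s ω‖ - ‖Y (φ k) (r + 1 / ((m:ℝ) + 1)) s ω‖
        ≤ ‖Y (φ k) (r + 1 / ((m:ℝ) + 1)) s ω - Yi (r + 1 / ((m:ℝ) + 1)) s ω‖ := by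
      have := norm_sub_norm_le (Yi (r + 1 / ((m:ℝ) + 1)) s ω) (Y (φ k) (r + 1 / ((m:ℝ) + 1)) s ω)
      rwa [norm_sub_rev] at this
    have hYn_big : r < ‖Y (φ k) (r + 1 / ((m:ℝ) + 1)) s ω‖ := by linarith
    have hmono : ρ (φ k) r ω ≤ ρ (φ k) (r + 1 / ((m:ℝ) + 1)) ω := by
      rw [hXe, hXe]; exact eRho_mono hT.le (hq_gt m).le
    have hsρn : s ≤ ρ (φ k) (r + 1 / ((m:ℝ) + 1)) ω := by linarith
    have hYX : Y (φ k) (r + 1 / ((m:ℝ) + 1)) s ω = X (φ k) s ω := h3 (φ k) m s ⟨hs0, hsρn⟩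
    have hXn_big : r < ‖X (φ k) s ω‖ := by rw [← hYX]; exact hYn_big
    have hsσn : s < σ (φ k) ω := by
      have := hρσ (φ k) r; linarith
    have hfinal : ρ (φ k) r ω ≤ s := by
      rw [hXe]
      exact eRho_le_of_norm_gt hT (hσmem (φ k) ω) (hXcont (φ k) ω) ⟨hs0, hsσn⟩ hXn_big
    linarith
  · -- second inequality: ρ_∞^{(r)} ≤ limsup ρ_n^{(r+ε)}
    have hsub : limsup (fun k => ρ (ψ k) (r + ε) ω) atTop
        ≤ limsup (fun n => ρ n (r + ε) ω) atTop := by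
      have heq : limsup (fun k => ρ (ψ k) (r + ε) ω) atTop
          = limsup (fun n => ρ n (r + ε) ω) (Filter.map ψ atTop) := rfl
      rw [heq]
      refine limsup_le_limsup_of_le hψ.tendsto_atTop ?_ ?_
      · exact IsBoundedUnder.isCoboundedUnder_le (isBoundedUnder_of ⟨0, fun n => hρ0 n (r + ε)⟩)
      · exact isBoundedUnder_of ⟨T, fun n => hρT n (r + ε)⟩
    refine le_trans ?_ hsub
    by_contra hcon
    push_neg at hcon
    set M := limsup (fun k => ρ (ψ k) (r + ε) ω) atTop with hM
    have hbnd : IsBoundedUnder (· ≤ ·) atTop (fun k => ρ (ψ k) (r + ε) ω) :=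
      isBoundedUnder_of ⟨T, fun k => hρT _ (r + ε)⟩
    set b := (M + ρi r ω) / 2 with hb_def
    have hb1 : M < b := by rw [hb_def]; linarith
    have hb2 : b < ρi r ω := by rw [hb_def]; linarith
    have hev1 : ∀ᶠ k in atTop, ρ (ψ k) (r + ε) ω < b := eventually_lt_of_limsup_lt hb1 hbnd
    have hev2 : ∀ᶠ k in atTop,
        (⨆ t : Set.Icc (0:ℝ) T, ‖Y (ψ k) (r + ε) (t : ℝ) ω - Yi (r + ε) (t : ℝ) ω‖)
          < ε / 2 := h2.eventually_lt_const (by linarith)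
    obtain ⟨k, hk1, hk2⟩ := (hev1.and hev2).exists
    set s := ρ (ψ k) (r + ε) ω with hs_def
    have hs0 : 0 ≤ s := hρ0 _ _
    have hsT : s < T := by
      have := hρiT r; linarith
    have hstruct : s < σ (ψ k) ω ∧ r + ε ≤ ‖X (ψ k) s ω‖ := by
      rw [hs_def, hXe]
      exact eRho_struct hT (hσmem (ψ k) ω) (hXcont (ψ k) ω) (by rw [← hXe]; exact hsT)
    have hYX : Y (ψ k) (r + ε) s ω = X (ψ k) s ω := h5 (ψ k) s ⟨hs0, le_rfl⟩
    have hsmem : s ∈ Set.Icc (0:ℝ) T := ⟨hs0, hsT.le⟩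
    have hbdd : BddAbove (Set.range fun t : Set.Icc (0:ℝ) T =>
        ‖Y (ψ k) (r + ε) (t : ℝ) ω - Yi (r + ε) (t : ℝ) ω‖) :=
      bddAbove_range_icc (((hYcont (ψ k) _ ω).sub (hYicont _ ω)).norm)
    have hle : ‖Y (ψ k) (r + ε) s ω - Yi (r + ε) s ω‖
        ≤ ⨆ t : Set.Icc (0:ℝ) T, ‖Y (ψ k) (r + ε) (t : ℝ) ω - Yi (r + ε) (t : ℝ) ω‖ :=
      le_ciSup hbdd (⟨s, hsmem⟩ : Set.Icc (0:ℝ) T)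
    have hYn_norm : r + ε ≤ ‖Y (ψ k) (r + ε) s ω‖ := by
      rw [hYX]; exact hstruct.2
    have hnorm1 : ‖Y (ψ k) (r + ε) s ω‖ - ‖Yi (r + ε) s ω‖
        ≤ ‖Y (ψ k) (r + ε) s ω - Yi (r + ε) s ω‖ :=
      norm_sub_norm_le _ _
    have hYi_big : r + ε / 2 < ‖Yi (r + ε) s ω‖ := by linarith
    have hmono : ρi r ω ≤ ρi (r + ε) ω := by
      rw [hXie, hXie]; exact eRho_mono hT.le (by linarith)
    have hsρi : s ≤ ρi (r + ε) ω := by linarith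
    have hYiX : Yi (r + ε) s ω = Xi s ω := h6 s ⟨hs0, hsρi⟩
    have hXi_big : r < ‖Xi s ω‖ := by rw [← hYiX]; linarith
    have hsσi : s < σi ω := by
      have := hρiσ r; linarith
    have hfinal : ρi r ω ≤ s := by
      rw [hXie]
      exact eRho_le_of_norm_gt hT (hσimem ω) (hXicont ω) ⟨hs0, hsσi⟩ hXi_big
    linarith
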